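/- arXiv:2402.04496 — 2 statements merged into one kernel-verified Lean document; each statement's English description precedes it below -/
import Mathlib

section
/- Let F be a Banach space. A bounded linear operator u : c_0 → F is absolutely 1-summing if and only if ∑_{j=1}^∞ ‖u(e_j)‖ < +∞, and in this case the absolutely summing norm satisfies π_1(u) = ∑_{j=1}^∞ ‖u(e_j)‖. In particular, for every sequence (x_j)_{j=1}^∞ in F with ∑_{j=1}^∞ ‖x_j‖ < +∞ there is a unique absolutely 1-summing operator u : c_0 → F with u(e_j) = x_j for every j, and π_1(u) = ∑_{j=1}^∞ ‖x_j‖. -/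
open Filter Topology
open scoped ENNReal NNReal

/-- The `j`-th canonical unit vector of `c₀`. -/
noncomputable def c0single (𝕜 : Type*) [RCLike 𝕜] (j : ℕ) : ZeroAtInftyContinuousMap ℕ 𝕜 where
  toFun := fun i => if i = j then 1 else 0
  continuous_toFun := continuous_of_discreteTopology
  zero_at_infty' := by
    have h : (fun i : ℕ => if i = j then (1 : 𝕜) else 0) =ᶠ[Filter.cocompact ℕ]
        (fun _ => (0 : 𝕜)) := by
      rw [cocompact_eq_atTop]
      filter_upwards [eventually_gt_atTop j] with i hi
      simp [hi.ne']
    exact Tendsto.congr' h.symm tendsto_const_nhds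

/-- `u` is absolutely `p`-summing with constant `C`:
`(∑_{k<m} ‖u(y_k)‖^p)^{1/p} ≤ C ⬝ sup_{‖φ‖ ≤ 1} (∑_{k<m} |φ(y_k)|^p)^{1/p}`
for every `m` and all `y_0, …, y_{m-1}`. -/
def IsPSummingWith (𝕜 : Type*) [RCLike 𝕜] {E F : Type*} [NormedAddCommGroup E]
    [NormedSpace 𝕜 E] [NormedAddCommGroup F] [NormedSpace 𝕜 F] (p : ℝ) (u : E →L[𝕜] F)
    (C : ℝ) : Prop :=
  ∀ (m : ℕ) (y : ℕ → E),
    (∑ k ∈ Finset.range m, ‖u (y k)‖ ^ p) ^ (1 / p) ≤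
      C * sSup {r : ℝ | ∃ φ : E →L[𝕜] 𝕜, ‖φ‖ ≤ 1 ∧
        r = (∑ k ∈ Finset.range m, ‖φ (y k)‖ ^ p) ^ (1 / p)}

/-- `u` is absolutely `p`-summing if it is so with some constant `C ≥ 0`. -/
def IsPSumming (𝕜 : Type*) [RCLike 𝕜] {E F : Type*} [NormedAddCommGroup E]
    [NormedSpace 𝕜 E] [NormedAddCommGroup F] [NormedSpace 𝕜 F] (p : ℝ)
    (u : E →L[𝕜] F) : Prop :=
  ∃ C : ℝ, 0 ≤ C ∧ IsPSummingWith 𝕜 p u C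

/-- The absolutely `p`-summing norm `π_p(u)`: the least admissible constant. -/
noncomputable def piNorm (𝕜 : Type*) [RCLike 𝕜] {E F : Type*} [NormedAddCommGroup E]
    [NormedSpace 𝕜 E] [NormedAddCommGroup F] [NormedSpace 𝕜 F] (p : ℝ)
    (u : E →L[𝕜] F) : ℝ :=
  sInf {C : ℝ | 0 ≤ C ∧ IsPSummingWith 𝕜 p u C}

section Aux
open Filter Topology Finset
variable {𝕜 : Type*} [RCLike 𝕜]

lemma c0_norm_apply_le (y : ZeroAtInftyContinuousMap ℕ 𝕜) (i : ℕ) : ‖y i‖ ≤ ‖y‖ := by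
  rw [← ZeroAtInftyContinuousMap.norm_toBCF_eq_norm]
  exact y.toBCF.norm_coe_le_norm i

lemma c0_norm_le (y : ZeroAtInftyContinuousMap ℕ 𝕜) {C : ℝ} (hC : 0 ≤ C)
    (h : ∀ i, ‖y i‖ ≤ C) : ‖y‖ ≤ C := by
  rw [← ZeroAtInftyContinuousMap.norm_toBCF_eq_norm]
  exact BoundedContinuousFunction.norm_le hC |>.2 h

/-- evaluation at `j` as a continuous linear functional on `c₀`. -/
noncomputable def c0ev (𝕜 : Type*) [RCLike 𝕜] (j : ℕ) :
    ZeroAtInftyContinuousMap ℕ 𝕜 →L[𝕜] 𝕜 :=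
  LinearMap.mkContinuous
    { toFun := fun y => y j
      map_add' := fun _ _ => rfl
      map_smul' := fun _ _ => rfl } 1
    (fun y => by simpa using c0_norm_apply_le y j)

@[simp] lemma c0ev_apply (j : ℕ) (y : ZeroAtInftyContinuousMap ℕ 𝕜) : c0ev 𝕜 j y = y j := rfl

lemma c0ev_norm_le (j : ℕ) : ‖(c0ev 𝕜 j : ZeroAtInftyContinuousMap ℕ 𝕜 →L[𝕜] 𝕜)‖ ≤ 1 :=
  LinearMap.mkContinuous_norm_le _ zero_le_one _

lemma c0single_apply (j i : ℕ) : c0single 𝕜 j i = if i = j then 1 else 0 := rfl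

lemma c0_sum_apply (m : ℕ) (f : ℕ → ZeroAtInftyContinuousMap ℕ 𝕜) (i : ℕ) :
    (∑ j ∈ Finset.range m, f j) i = ∑ j ∈ Finset.range m, f j i := by
  induction m with
  | zero => simp
  | succ n ih => simp [Finset.sum_range_succ, ih]

lemma smul_c0single_apply (c : ℕ → 𝕜) (m i : ℕ) :
    (∑ j ∈ Finset.range m, c j • c0single 𝕜 j) i = if i < m then c i else 0 := by
  rw [c0_sum_apply]
  by_cases h : i < m
  · rw [Finset.sum_eq_single i]
    · simp [c0single_apply, h]
    · intro b _ hb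
      simp [c0single_apply, Ne.symm hb]
    · intro hi
      exact absurd (Finset.mem_range.2 h) hi
  · rw [Finset.sum_eq_zero, if_neg h]
    intro b hb
    have : b ≠ i := by rintro rfl; exact h (Finset.mem_range.1 hb)
    simp [c0single_apply, Ne.symm this]

lemma tendsto_partialSum (y : ZeroAtInftyContinuousMap ℕ 𝕜) :
    Tendsto (fun n => ∑ j ∈ Finset.range n, y j • c0single 𝕜 j) atTop (𝓝 y) := by
  rw [Metric.tendsto_atTop]
  intro ε hε
  have h0 : Tendsto (fun i => y i) atTop (𝓝 0) := by
    have := zero_at_infty y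
    rwa [cocompact_eq_atTop] at this
  have h1 : ∀ᶠ i in atTop, ‖y i‖ < ε/2 :=
    (NormedAddCommGroup.tendsto_nhds_zero.mp h0) (ε/2) (by positivity)
  obtain ⟨N, hN⟩ := eventually_atTop.1 h1
  refine ⟨N, fun n hn => ?_⟩
  rw [dist_eq_norm]
  have hle : ‖(∑ j ∈ Finset.range n, y j • c0single 𝕜 j) - y‖ ≤ ε/2 := by
    apply c0_norm_le _ (by positivity)
    intro i
    have : ((∑ j ∈ Finset.range n, y j • c0single 𝕜 j) - y) i
        = (if i < n then y i else 0) - y i := by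
      rw [ZeroAtInftyContinuousMap.sub_apply, smul_c0single_apply]
    rw [this]
    by_cases h : i < n
    · simp [h]; positivity
    · rw [if_neg h, zero_sub, norm_neg]
      exact (hN i (le_trans hn (not_lt.1 h))).le
  linarith

variable {F : Type*} [NormedAddCommGroup F] [NormedSpace 𝕜 F]

lemma tendsto_map_partialSum (v : ZeroAtInftyContinuousMap ℕ 𝕜 →L[𝕜] F)
    (y : ZeroAtInftyContinuousMap ℕ 𝕜) :
    Tendsto (fun n => ∑ j ∈ Finset.range n, y j • v (c0single 𝕜 j)) atTop (𝓝 (v y)) := by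
  have := (v.continuous.tendsto y).comp (tendsto_partialSum y)
  simpa [Function.comp_def, map_sum] using this

/-- Uniqueness of a bounded operator with prescribed values on the unit vectors. -/
lemma c0op_unique (v w : ZeroAtInftyContinuousMap ℕ 𝕜 →L[𝕜] F)
    (h : ∀ j, v (c0single 𝕜 j) = w (c0single 𝕜 j)) : v = w := by
  ext y
  have hv := tendsto_map_partialSum v y
  have hw := tendsto_map_partialSum w y
  simp only [h] at hv
  exact tendsto_nhds_unique hv hw

lemma hasSum_map [CompleteSpace F] (v : ZeroAtInftyContinuousMap ℕ 𝕜 →L[𝕜] F)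
    (hv : Summable fun j => ‖v (c0single 𝕜 j)‖) (y : ZeroAtInftyContinuousMap ℕ 𝕜) :
    HasSum (fun j => y j • v (c0single 𝕜 j)) (v y) := by
  have hsum : Summable fun j => y j • v (c0single 𝕜 j) := by
    apply Summable.of_norm
    apply Summable.of_nonneg_of_le (fun j => norm_nonneg _) (fun j => ?_) (hv.mul_left ‖y‖)
    rw [norm_smul]
    exact mul_le_mul_of_nonneg_right (c0_norm_apply_le y j) (norm_nonneg _)
  have h1 := hsum.hasSum.tendsto_sum_nat
  have h2 := tendsto_map_partialSum v y
  have heq : v y = ∑' j, y j • v (c0single 𝕜 j) := tendsto_nhds_unique h2 h1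
  rw [heq]
  exact hsum.hasSum

lemma norm_map_le [CompleteSpace F] (v : ZeroAtInftyContinuousMap ℕ 𝕜 →L[𝕜] F)
    (hv : Summable fun j => ‖v (c0single 𝕜 j)‖) (y : ZeroAtInftyContinuousMap ℕ 𝕜) :
    ‖v y‖ ≤ ∑' j, ‖y j‖ * ‖v (c0single 𝕜 j)‖ := by
  have h := (hasSum_map v hv y).tsum_eq
  have hs : Summable fun j => ‖y j • v (c0single 𝕜 j)‖ := by
    apply Summable.of_nonneg_of_le (fun j => norm_nonneg _) (fun j => ?_) (hv.mul_left ‖y‖)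
    rw [norm_smul]
    exact mul_le_mul_of_nonneg_right (c0_norm_apply_le y j) (norm_nonneg _)
  calc ‖v y‖ = ‖∑' j, y j • v (c0single 𝕜 j)‖ := by rw [h]
    _ ≤ ∑' j, ‖y j • v (c0single 𝕜 j)‖ := norm_tsum_le_tsum_norm hs
    _ = ∑' j, ‖y j‖ * ‖v (c0single 𝕜 j)‖ := by
        simp_rw [norm_smul]

end Aux
section Aux2
open Filter Topology Finset
variable {𝕜 : Type*} [RCLike 𝕜] {F : Type*} [NormedAddCommGroup F] [NormedSpace 𝕜 F]

lemma sup_single_le_one (m : ℕ) :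
    sSup {r : ℝ | ∃ φ : ZeroAtInftyContinuousMap ℕ 𝕜 →L[𝕜] 𝕜, ‖φ‖ ≤ 1 ∧
      r = ∑ k ∈ Finset.range m, ‖φ (c0single 𝕜 k)‖} ≤ 1 := by
  apply Real.sSup_le ?_ zero_le_one
  rintro r ⟨φ, hφ, rfl⟩
  have hc : ∀ k : ℕ, ∃ c : 𝕜, ‖c‖ ≤ 1 ∧ c * φ (c0single 𝕜 k) = (‖φ (c0single 𝕜 k)‖ : 𝕜) := by
    intro k
    set a := φ (c0single 𝕜 k)
    by_cases h : a = 0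
    · exact ⟨0, by simp [h]⟩
    · refine ⟨(‖a‖ : 𝕜) / a, ?_, div_mul_cancel₀ _ h⟩
      rw [norm_div]
      simp [h, norm_ne_zero_iff.2 h]
  choose c hc1 hc2 using hc
  set z := ∑ k ∈ Finset.range m, c k • c0single 𝕜 k with hz
  have hznorm : ‖z‖ ≤ 1 := by
    apply c0_norm_le _ zero_le_one
    intro i
    rw [hz, smul_c0single_apply]
    split
    · exact hc1 i
    · simp
  have hφz : φ z = ((∑ k ∈ Finset.range m, ‖φ (c0single 𝕜 k)‖ : ℝ) : 𝕜) := by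
    rw [hz, map_sum]
    simp_rw [map_smul, smul_eq_mul, hc2]
    push_cast
    ring
  calc ∑ k ∈ Finset.range m, ‖φ (c0single 𝕜 k)‖ = ‖φ z‖ := by
        rw [hφz, RCLike.norm_ofReal, abs_of_nonneg]
        exact Finset.sum_nonneg fun k _ => norm_nonneg _
    _ ≤ ‖φ‖ * ‖z‖ := φ.le_opNorm z
    _ ≤ 1 * 1 := mul_le_mul hφ hznorm (norm_nonneg _) zero_le_one
    _ = 1 := one_mul 1

lemma partial_le (u : ZeroAtInftyContinuousMap ℕ 𝕜 →L[𝕜] F) {C : ℝ} (hC0 : 0 ≤ C)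
    (hC : IsPSummingWith 𝕜 1 u C) (m : ℕ) :
    ∑ k ∈ Finset.range m, ‖u (c0single 𝕜 k)‖ ≤ C := by
  have h := hC m (fun k => c0single 𝕜 k)
  simp only [one_div_one, Real.rpow_one] at h
  refine h.trans ?_
  calc C * sSup {r : ℝ | ∃ φ : ZeroAtInftyContinuousMap ℕ 𝕜 →L[𝕜] 𝕜, ‖φ‖ ≤ 1 ∧
          r = ∑ k ∈ Finset.range m, ‖φ (c0single 𝕜 k)‖}
      ≤ C * 1 := mul_le_mul_of_nonneg_left (sup_single_le_one m) hC0
    _ = C := mul_one C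

lemma summable_of_summing (u : ZeroAtInftyContinuousMap ℕ 𝕜 →L[𝕜] F)
    (h : IsPSumming 𝕜 1 u) : Summable fun j => ‖u (c0single 𝕜 j)‖ := by
  obtain ⟨C, hC0, hC⟩ := h
  exact summable_of_sum_range_le (fun j => norm_nonneg _) (partial_le u hC0 hC)

lemma tsum_le_of_summing (u : ZeroAtInftyContinuousMap ℕ 𝕜 →L[𝕜] F) {C : ℝ}
    (hC0 : 0 ≤ C) (hC : IsPSummingWith 𝕜 1 u C) :
    ∑' j, ‖u (c0single 𝕜 j)‖ ≤ C :=
  Summable.tsum_le_of_sum_range_le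
    (summable_of_sum_range_le (fun j => norm_nonneg _) (partial_le u hC0 hC))
    (partial_le u hC0 hC)

lemma summing_of_summable [CompleteSpace F] (u : ZeroAtInftyContinuousMap ℕ 𝕜 →L[𝕜] F)
    (hu : Summable fun j => ‖u (c0single 𝕜 j)‖) :
    IsPSummingWith 𝕜 1 u (∑' j, ‖u (c0single 𝕜 j)‖) := by
  intro m y
  simp only [one_div_one, Real.rpow_one]
  have hbdd : BddAbove {r : ℝ | ∃ φ : ZeroAtInftyContinuousMap ℕ 𝕜 →L[𝕜] 𝕜, ‖φ‖ ≤ 1 ∧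
      r = ∑ k ∈ Finset.range m, ‖φ (y k)‖} := by
    refine ⟨∑ k ∈ Finset.range m, ‖y k‖, ?_⟩
    rintro r ⟨φ, hφ, rfl⟩
    apply Finset.sum_le_sum
    intro k _
    calc ‖φ (y k)‖ ≤ ‖φ‖ * ‖y k‖ := φ.le_opNorm _
      _ ≤ 1 * ‖y k‖ := mul_le_mul_of_nonneg_right hφ (norm_nonneg _)
      _ = ‖y k‖ := one_mul _
  set M := sSup {r : ℝ | ∃ φ : ZeroAtInftyContinuousMap ℕ 𝕜 →L[𝕜] 𝕜, ‖φ‖ ≤ 1 ∧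
      r = ∑ k ∈ Finset.range m, ‖φ (y k)‖} with hM
  have hMj : ∀ j, ∑ k ∈ Finset.range m, ‖y k j‖ ≤ M := by
    intro j
    apply le_csSup hbdd
    exact ⟨c0ev 𝕜 j, c0ev_norm_le j, by simp⟩
  have hsum_k : ∀ k, Summable fun j => ‖(y k) j‖ * ‖u (c0single 𝕜 j)‖ := fun k =>
    Summable.of_nonneg_of_le (fun j => by positivity)
      (fun j => mul_le_mul_of_nonneg_right (c0_norm_apply_le _ j) (norm_nonneg _))
      (hu.mul_left ‖y k‖)
  have hsum_sum : Summable fun j => (∑ k ∈ Finset.range m, ‖(y k) j‖) * ‖u (c0single 𝕜 j)‖ :=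
    (summable_sum fun k _ => hsum_k k).congr fun j => (Finset.sum_mul _ _ _).symm
  calc ∑ k ∈ Finset.range m, ‖u (y k)‖
      ≤ ∑ k ∈ Finset.range m, ∑' j, ‖(y k) j‖ * ‖u (c0single 𝕜 j)‖ :=
        Finset.sum_le_sum fun k _ => norm_map_le u hu (y k)
    _ = ∑' j, ∑ k ∈ Finset.range m, ‖(y k) j‖ * ‖u (c0single 𝕜 j)‖ :=
        (Summable.tsum_finsetSum fun k _ => hsum_k k).symm
    _ = ∑' j, (∑ k ∈ Finset.range m, ‖(y k) j‖) * ‖u (c0single 𝕜 j)‖ := by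
        simp_rw [Finset.sum_mul]
    _ ≤ ∑' j, M * ‖u (c0single 𝕜 j)‖ :=
        Summable.tsum_le_tsum (fun j => mul_le_mul_of_nonneg_right (hMj j) (norm_nonneg _))
          hsum_sum (hu.mul_left M)
    _ = M * ∑' j, ‖u (c0single 𝕜 j)‖ := tsum_mul_left
    _ = (∑' j, ‖u (c0single 𝕜 j)‖) * M := mul_comm _ _

end Aux2
section Aux3
open Filter Topology Finset
variable {𝕜 : Type*} [RCLike 𝕜] {F : Type*} [NormedAddCommGroup F] [NormedSpace 𝕜 F]
  [CompleteSpace F]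

lemma summable_apply_smul (x : ℕ → F) (hx : Summable fun j => ‖x j‖)
    (y : ZeroAtInftyContinuousMap ℕ 𝕜) : Summable fun j => y j • x j := by
  apply Summable.of_norm
  apply Summable.of_nonneg_of_le (fun j => norm_nonneg _) (fun j => ?_) (hx.mul_left ‖y‖)
  rw [norm_smul]
  exact mul_le_mul_of_nonneg_right (c0_norm_apply_le y j) (norm_nonneg _)

/-- The operator `c₀ → F` determined by `e_j ↦ x_j`. -/
noncomputable def c0op (x : ℕ → F) (hx : Summable fun j => ‖x j‖) :
    ZeroAtInftyContinuousMap ℕ 𝕜 →L[𝕜] F :=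
  LinearMap.mkContinuous
    { toFun := fun y => ∑' j, y j • x j
      map_add' := fun a b => by
        simp only [ZeroAtInftyContinuousMap.add_apply, add_smul]
        exact Summable.tsum_add (summable_apply_smul x hx a) (summable_apply_smul x hx b)
      map_smul' := fun c a => by
        simp only [ZeroAtInftyContinuousMap.smul_apply, smul_assoc, RingHom.id_apply]
        exact Summable.tsum_const_smul c (summable_apply_smul x hx a) }
    (∑' j, ‖x j‖)
    (fun y => by
      simp only [LinearMap.coe_mk, AddHom.coe_mk]
      have hs : Summable fun j => ‖y j • x j‖ := by
        apply Summable.of_nonneg_of_le (fun j => norm_nonneg _) (fun j => ?_) (hx.mul_left ‖y‖)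
        rw [norm_smul]
        exact mul_le_mul_of_nonneg_right (c0_norm_apply_le y j) (norm_nonneg _)
      calc ‖∑' j, y j • x j‖ ≤ ∑' j, ‖y j • x j‖ := norm_tsum_le_tsum_norm hs
        _ ≤ ∑' j, ‖y‖ * ‖x j‖ := Summable.tsum_le_tsum (fun j => by
              rw [norm_smul]
              exact mul_le_mul_of_nonneg_right (c0_norm_apply_le y j) (norm_nonneg _))
            hs (hx.mul_left ‖y‖)
        _ = ‖y‖ * ∑' j, ‖x j‖ := tsum_mul_left
        _ = (∑' j, ‖x j‖) * ‖y‖ := mul_comm _ _)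

lemma c0op_single (x : ℕ → F) (hx : Summable fun j => ‖x j‖) (j : ℕ) :
    c0op (𝕜 := 𝕜) x hx (c0single 𝕜 j) = x j := by
  show ∑' i, c0single 𝕜 j i • x i = x j
  rw [tsum_eq_single j]
  · simp [c0single_apply]
  · intro b hb
    simp [c0single_apply, hb]

end Aux3

/-- A bounded operator `u : c₀ → F` is absolutely `1`-summing iff
`∑_j ‖u(e_j)‖ < ∞`, in which case `π₁(u) = ∑_j ‖u(e_j)‖`; and for every `(x_j)` with
`∑_j ‖x_j‖ < ∞` there is a unique absolutely `1`-summing operator `u : c₀ → F` with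
`u(e_j) = x_j` for all `j`, and `π₁(u) = ∑_j ‖x_j‖`. -/
theorem stmt_9 {𝕜 : Type*} [RCLike 𝕜] {F : Type*} [NormedAddCommGroup F] [NormedSpace 𝕜 F]
    [CompleteSpace F] (u : ZeroAtInftyContinuousMap ℕ 𝕜 →L[𝕜] F) :
    (IsPSumming 𝕜 1 u ↔ Summable fun j => ‖u (c0single 𝕜 j)‖) ∧
    (IsPSumming 𝕜 1 u → piNorm 𝕜 1 u = ∑' j, ‖u (c0single 𝕜 j)‖) ∧
    ∀ x : ℕ → F, (Summable fun j => ‖x j‖) →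
      (∃! v : ZeroAtInftyContinuousMap ℕ 𝕜 →L[𝕜] F,
        IsPSumming 𝕜 1 v ∧ ∀ j, v (c0single 𝕜 j) = x j) ∧
      ∀ v : ZeroAtInftyContinuousMap ℕ 𝕜 →L[𝕜] F,
        (IsPSumming 𝕜 1 v ∧ ∀ j, v (c0single 𝕜 j) = x j) →
          piNorm 𝕜 1 v = ∑' j, ‖x j‖ := by
  -- the iff, for a general operator
  have hiff : ∀ w : ZeroAtInftyContinuousMap ℕ 𝕜 →L[𝕜] F,
      IsPSumming 𝕜 1 w ↔ Summable fun j => ‖w (c0single 𝕜 j)‖ := by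
    intro w
    constructor
    · exact summable_of_summing w
    · intro hw
      exact ⟨∑' j, ‖w (c0single 𝕜 j)‖, tsum_nonneg fun j => norm_nonneg _,
        summing_of_summable w hw⟩
  -- the norm formula, for a general operator
  have hnorm : ∀ w : ZeroAtInftyContinuousMap ℕ 𝕜 →L[𝕜] F,
      IsPSumming 𝕜 1 w → piNorm 𝕜 1 w = ∑' j, ‖w (c0single 𝕜 j)‖ := by
    intro w hw
    have hsum := summable_of_summing w hw
    apply le_antisymm
    · apply csInf_le
      · exact ⟨0, fun C hC => hC.1⟩
      · exact ⟨tsum_nonneg fun j => norm_nonneg _, summing_of_summable w hsum⟩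
    · apply le_csInf
      · obtain ⟨C, hC0, hC⟩ := hw
        exact ⟨C, hC0, hC⟩
      · rintro C ⟨hC0, hC⟩
        exact tsum_le_of_summing w hC0 hC
  refine ⟨hiff u, hnorm u, ?_⟩
  intro x hx
  have hvs : IsPSumming 𝕜 1 (c0op (𝕜 := 𝕜) x hx) ∧
      ∀ j, c0op (𝕜 := 𝕜) x hx (c0single 𝕜 j) = x j := by
    refine ⟨(hiff _).2 ?_, c0op_single x hx⟩
    have : (fun j => ‖c0op (𝕜 := 𝕜) x hx (c0single 𝕜 j)‖) = fun j => ‖x j‖ := by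
      funext j; rw [c0op_single]
    rw [this]
    exact hx
  constructor
  · refine ⟨c0op (𝕜 := 𝕜) x hx, hvs, ?_⟩
    rintro v ⟨-, hv2⟩
    apply c0op_unique
    intro j
    rw [hv2 j, c0op_single]
  · rintro v ⟨hv1, hv2⟩
    rw [hnorm v hv1]
    congr 1
    funext j
    rw [hv2 j]
end

section
/- Let E and F be Banach spaces, 1 ≤ p < ∞, and let u : E → F be a bounded linear operator. Then the following are equivalent: (i) for every mid p-summable sequence (x_j)_{j=1}^∞ in E, lim_{j→∞} ‖u(x_j)‖ = 0; (ii) for every mid p-summable sequence (x_j)_{j=1}^∞ in E, the sequence (u(x_j))_{j=1}^∞ is unconditionally p-summable in F. -/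
open Filter Topology
open scoped ENNReal NNReal

/-- The weak `ℓ_p` "norm" of a Banach-space valued sequence, valued in `ℝ≥0∞`:
`sup_{‖φ‖ ≤ 1} (∑_j |φ(x_j)|^p)^{1/p}`. -/
noncomputable def weakLpNorm (𝕜 : Type*) [RCLike 𝕜] {X : Type*} [NormedAddCommGroup X]
    [NormedSpace 𝕜 X] (p : ℝ) (x : ℕ → X) : ℝ≥0∞ :=
  ⨆ φ ∈ {φ : X →L[𝕜] 𝕜 | ‖φ‖ ≤ 1}, (∑' j, (‖φ (x j)‖₊ : ℝ≥0∞) ^ p) ^ (1 / p)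

/-- A sequence is weakly `p`-summable if `(φ(x_j))_j ∈ ℓ_p` for every continuous functional. -/
def WeaklyLpSummable (𝕜 : Type*) [RCLike 𝕜] {X : Type*} [NormedAddCommGroup X]
    [NormedSpace 𝕜 X] (p : ℝ) (x : ℕ → X) : Prop :=
  ∀ φ : X →L[𝕜] 𝕜, Summable fun j => ‖φ (x j)‖ ^ p

/-- A sequence is unconditionally `p`-summable if it is weakly `p`-summable and the weak
`p`-norms of its tails tend to zero. -/
def UncondLpSummable (𝕜 : Type*) [RCLike 𝕜] {X : Type*} [NormedAddCommGroup X]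
    [NormedSpace 𝕜 X] (p : ℝ) (x : ℕ → X) : Prop :=
  WeaklyLpSummable 𝕜 p x ∧
    Tendsto (fun n : ℕ => weakLpNorm 𝕜 p fun j => x (n + j)) atTop (𝓝 (0 : ℝ≥0∞))

/-- The mid `p`-"norm" of a sequence, valued in `ℝ≥0∞`: the supremum of
`(∑_n ∑_j |φ_n(x_j)|^p)^{1/p}` over all weakly `p`-summable sequences `(φ_n)` in the dual
with weak `p`-norm at most one.  A sequence is mid `p`-summable iff this is `< ⊤`. -/
noncomputable def midLpNorm (𝕜 : Type*) [RCLike 𝕜] {X : Type*} [NormedAddCommGroup X]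
    [NormedSpace 𝕜 X] (p : ℝ) (x : ℕ → X) : ℝ≥0∞ :=
  ⨆ φ ∈ {φ : ℕ → X →L[𝕜] 𝕜 | WeaklyLpSummable 𝕜 p φ ∧ weakLpNorm 𝕜 p φ ≤ 1},
    (∑' n, ∑' j, (‖φ n (x j)‖₊ : ℝ≥0∞) ^ p) ^ (1 / p)

section AuxLemmas

private lemma tail_split (g : ℕ → ℝ≥0∞) {n m : ℕ} (h : n ≤ m) :
    (∑' j, g (n + j)) = (∑ j ∈ Finset.Ico n m, g j) + ∑' j, g (m + j) := by
  induction m, h using Nat.le_induction with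
  | base => simp
  | succ m hm ih =>
    have h2 : (∑' j, g (m + j)) = g m + ∑' j, g ((m + 1) + j) := by
      rw [tsum_eq_zero_add' ENNReal.summable]
      simp only [Nat.add_zero]
      congr 1
      exact tsum_congr fun j => by rw [show m + (j + 1) = (m + 1) + j by omega]
    rw [ih, Finset.sum_Ico_succ_top hm, h2, add_assoc]

private lemma tail_mono (g : ℕ → ℝ≥0∞) {n m : ℕ} (h : n ≤ m) :
    (∑' j, g (m + j)) ≤ ∑' j, g (n + j) := by
  rw [tail_split g h]; exact le_add_self

variable {𝕜 : Type*} [RCLike 𝕜] {X : Type*} [NormedAddCommGroup X] [NormedSpace 𝕜 X]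

private lemma coe_nnnorm_rpow {p : ℝ} (hp : 0 < p) (v : 𝕜) :
    (‖v‖₊ : ℝ≥0∞) ^ p = ENNReal.ofReal (‖v‖ ^ p) := by
  rw [← ENNReal.ofReal_coe_nnreal, coe_nnnorm, ENNReal.ofReal_rpow_of_nonneg (norm_nonneg _) hp.le]

private lemma finsum_ofReal {p : ℝ} (hp : 0 < p) (I : Finset ℕ) (v : ℕ → 𝕜) :
    ∑ j ∈ I, (‖v j‖₊ : ℝ≥0∞) ^ p = ENNReal.ofReal (∑ j ∈ I, ‖v j‖ ^ p) := by
  rw [ENNReal.ofReal_sum_of_nonneg (fun j _ => Real.rpow_nonneg (norm_nonneg _) _)]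
  exact Finset.sum_congr rfl fun j _ => coe_nnnorm_rpow hp _

private lemma single_le_mid {p : ℝ} (hp : 0 < p) (x : ℕ → X) (ψ : X →L[𝕜] 𝕜) (hψ : ‖ψ‖ ≤ 1) :
    (∑' j, (‖ψ (x j)‖₊ : ℝ≥0∞) ^ p) ^ (1 / p) ≤ midLpNorm 𝕜 p x := by
  set e : ℕ → X →L[𝕜] 𝕜 := fun n => if n = 0 then ψ else 0 with he
  have hmem : e ∈ {φ : ℕ → X →L[𝕜] 𝕜 | WeaklyLpSummable 𝕜 p φ ∧ weakLpNorm 𝕜 p φ ≤ 1} := by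
    constructor
    · intro Φ
      apply summable_of_ne_finset_zero (s := ({0} : Finset ℕ))
      intro n hn
      simp only [Finset.mem_singleton] at hn
      simp [he, hn, Real.zero_rpow hp.ne']
    · rw [weakLpNorm]
      apply iSup₂_le
      intro Φ hΦ
      have h1 : (∑' n, (‖Φ (e n)‖₊ : ℝ≥0∞) ^ p) = (‖Φ ψ‖₊ : ℝ≥0∞) ^ p := by
        rw [tsum_eq_single 0 (fun n hn => by
          simp [he, hn, ENNReal.zero_rpow_of_pos hp])]
        simp [he]
      rw [h1]
      apply ENNReal.rpow_le_one _ (by positivity)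
      apply ENNReal.rpow_le_one _ hp.le
      have : ‖Φ ψ‖ ≤ 1 := le_trans (Φ.le_opNorm ψ) (by
        calc ‖Φ‖ * ‖ψ‖ ≤ 1 * 1 := mul_le_mul hΦ hψ (norm_nonneg _) zero_le_one
        _ = 1 := one_mul 1)
      exact_mod_cast this
  have h0 : (∑' n, ∑' j, (‖e n (x j)‖₊ : ℝ≥0∞) ^ p) = ∑' j, (‖ψ (x j)‖₊ : ℝ≥0∞) ^ p := by
    rw [tsum_eq_single 0 (fun n hn => by
      simp [he, hn, ENNReal.zero_rpow_of_pos hp])]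
    simp [he]
  rw [midLpNorm, ← h0]
  exact le_iSup₂_of_le e hmem le_rfl

private lemma tsum_rpow_lt_top {p : ℝ} (hp : 0 < p) {x : ℕ → X} (hx : midLpNorm 𝕜 p x < ⊤)
    (ψ : X →L[𝕜] 𝕜) : (∑' j, (‖ψ (x j)‖₊ : ℝ≥0∞) ^ p) ≠ ⊤ := by
  have key : ∀ φ : X →L[𝕜] 𝕜, ‖φ‖ ≤ 1 → (∑' j, (‖φ (x j)‖₊ : ℝ≥0∞) ^ p) ≠ ⊤ := by
    intro φ hφ
    have h1 := single_le_mid hp x φ hφ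
    have h2 : (∑' j, (‖φ (x j)‖₊ : ℝ≥0∞) ^ p) =
        ((∑' j, (‖φ (x j)‖₊ : ℝ≥0∞) ^ p) ^ (1 / p)) ^ p := by
      rw [← ENNReal.rpow_mul, one_div, inv_mul_cancel₀ hp.ne', ENNReal.rpow_one]
    rw [h2]
    exact (ENNReal.rpow_lt_top_of_nonneg hp.le
      ((lt_of_le_of_lt h1 hx)).ne).ne
  rcases eq_or_ne ψ 0 with rfl | hψ
  · simpa using key 0 (by simp)
  · have hn : ‖ψ‖ ≠ 0 := norm_ne_zero_iff.mpr hψ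
    set c : 𝕜 := ((‖ψ‖ : ℝ) : 𝕜)⁻¹ with hcdef
    have hc : ‖c‖ = ‖ψ‖⁻¹ := by
      rw [hcdef, norm_inv, RCLike.norm_ofReal, abs_of_nonneg (norm_nonneg _)]
    set ψ₀ : X →L[𝕜] 𝕜 := c • ψ with hψ₀
    have happ : ∀ v, ψ₀ v = c * ψ v := fun v => rfl
    have hψ₀n : ‖ψ₀‖ ≤ 1 := by
      apply ContinuousLinearMap.opNorm_le_bound _ zero_le_one
      intro v
      rw [happ v, norm_mul, hc, one_mul]
      calc ‖ψ‖⁻¹ * ‖ψ v‖ ≤ ‖ψ‖⁻¹ * (‖ψ‖ * ‖v‖) := by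
            gcongr
            exact ψ.le_opNorm v
        _ = ‖v‖ := by field_simp
    have hterm : ∀ j, (‖ψ (x j)‖₊ : ℝ≥0∞) ^ p
        = (‖ψ‖₊ : ℝ≥0∞) ^ p * (‖ψ₀ (x j)‖₊ : ℝ≥0∞) ^ p := by
      intro j
      have h3 : ψ (x j) = (‖ψ‖ : 𝕜) * ψ₀ (x j) := by
        rw [happ, ← mul_assoc, hcdef, mul_inv_cancel₀ (by exact_mod_cast hn), one_mul]
      rw [h3, ← ENNReal.mul_rpow_of_nonneg _ _ hp.le]
      congr 1
      rw [nnnorm_mul, ENNReal.coe_mul]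
      congr 2
      ext
      simp [RCLike.norm_ofReal, abs_of_nonneg (norm_nonneg ψ)]
    calc (∑' j, (‖ψ (x j)‖₊ : ℝ≥0∞) ^ p)
        = (‖ψ‖₊ : ℝ≥0∞) ^ p * ∑' j, (‖ψ₀ (x j)‖₊ : ℝ≥0∞) ^ p := by
          rw [← ENNReal.tsum_mul_left]; exact tsum_congr hterm
      _ ≠ ⊤ := by
          apply ENNReal.mul_ne_top
          · exact (ENNReal.rpow_lt_top_of_nonneg hp.le ENNReal.coe_ne_top).ne
          · exact key ψ₀ hψ₀n

private lemma summable_of_mid {p : ℝ} (hp : 0 < p) {x : ℕ → X} (hx : midLpNorm 𝕜 p x < ⊤)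
    (ψ : X →L[𝕜] 𝕜) : Summable fun j => ‖ψ (x j)‖ ^ p := by
  have h := tsum_rpow_lt_top hp hx ψ
  have h' : (∑' j, ((‖ψ (x j)‖₊ ^ p : ℝ≥0) : ℝ≥0∞)) ≠ ⊤ := by
    simpa only [ENNReal.coe_rpow_of_nonneg _ hp.le] using h
  have hs := ENNReal.tsum_coe_ne_top_iff_summable.mp h'
  have h2 := NNReal.summable_coe.mpr hs
  refine h2.congr fun j => ?_
  simp [NNReal.coe_rpow]

private lemma holder_gadget {p : ℝ} (hp : 1 ≤ p) (I : Finset ℕ) (s : ℕ → 𝕜)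
    (hS : 0 < ∑ i ∈ I, ‖s i‖ ^ p) :
    ∃ a : ℕ → 𝕜, ((∑ i ∈ I, a i * s i) = (((∑ i ∈ I, ‖s i‖ ^ p) ^ (1 / p) : ℝ) : 𝕜)) ∧
      ∀ t : ℕ → 𝕜, ‖∑ i ∈ I, a i * t i‖ ^ p ≤ ∑ i ∈ I, ‖t i‖ ^ p := by
  have hp0 : (0 : ℝ) < p := lt_of_lt_of_le one_pos hp
  set S : ℝ := ∑ i ∈ I, ‖s i‖ ^ p with hSdef
  set D : ℝ := S ^ ((p - 1) / p) with hDdef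
  have hD : 0 < D := Real.rpow_pos_of_pos hS _
  set a : ℕ → 𝕜 := fun i =>
    if s i = 0 then 0 else ((‖s i‖ ^ (p - 2) / D : ℝ) : 𝕜) * (starRingEnd 𝕜) (s i) with hadef
  have hw : ∀ i, ‖a i‖ = if s i = 0 then 0 else ‖s i‖ ^ (p - 1) / D := by
    intro i
    by_cases h : s i = 0
    · simp [hadef, h]
    · have hpos : (0 : ℝ) < ‖s i‖ := norm_pos_iff.mpr h
      rw [hadef]
      simp only [h, if_false]
      rw [norm_mul, RCLike.norm_ofReal, RCLike.norm_conj,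
        abs_of_nonneg (div_nonneg (Real.rpow_nonneg (norm_nonneg _) _) hD.le),
        div_mul_eq_mul_div]
      congr 1
      nth_rewrite 2 [← Real.rpow_one ‖s i‖]
      rw [← Real.rpow_add hpos]
      congr 1
      ring
  refine ⟨a, ?_, ?_⟩
  · have hterm : ∀ i ∈ I, a i * s i = ((‖s i‖ ^ p / D : ℝ) : 𝕜) := by
      intro i _
      by_cases h : s i = 0
      · simp [hadef, h, Real.zero_rpow hp0.ne']
      · have hpos : (0 : ℝ) < ‖s i‖ := norm_pos_iff.mpr h
        rw [hadef]
        simp only [h, if_false]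
        rw [mul_assoc, RCLike.conj_mul, ← RCLike.ofReal_pow, ← RCLike.ofReal_mul]
        congr 1
        rw [div_mul_eq_mul_div]
        congr 1
        rw [← Real.rpow_natCast ‖s i‖ 2, ← Real.rpow_add hpos]
        norm_num
    rw [Finset.sum_congr rfl hterm, ← RCLike.ofReal_sum]
    congr 1
    rw [← Finset.sum_div, ← hSdef, hDdef]
    have h4 : S / S ^ ((p - 1) / p) = S ^ (1 - (p - 1) / p) := by
      rw [Real.rpow_sub hS, Real.rpow_one]
    rw [h4]
    congr 1
    field_simp
    ring
  · intro t
    have hR0 : (0 : ℝ) ≤ ∑ i ∈ I, ‖t i‖ ^ p :=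
      Finset.sum_nonneg fun i _ => Real.rpow_nonneg (norm_nonneg _) _
    have key : ∑ i ∈ I, ‖a i‖ * ‖t i‖ ≤ (∑ i ∈ I, ‖t i‖ ^ p) ^ (1 / p) := by
      rcases eq_or_lt_of_le hp with hp1 | hplt
      · have hP : p = 1 := hp1.symm
        have h1 : ∀ i ∈ I, ‖a i‖ * ‖t i‖ ≤ ‖t i‖ := by
          intro i _
          by_cases h : s i = 0
          · simp [hw i, h, norm_nonneg]
          · have : ‖a i‖ = 1 := by
              rw [hw i]
              simp only [h, if_false, hDdef, hP, sub_self, zero_div, Real.rpow_zero, div_one]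
            rw [this, one_mul]
        calc ∑ i ∈ I, ‖a i‖ * ‖t i‖ ≤ ∑ i ∈ I, ‖t i‖ := Finset.sum_le_sum h1
          _ = (∑ i ∈ I, ‖t i‖ ^ p) ^ (1 / p) := by rw [hP]; simp
      · set q : ℝ := p.conjExponent with hqdef
        have hpq : p.HolderConjugate q := Real.HolderConjugate.conjExponent hplt
        have hqp : q.HolderConjugate p := hpq.symm
        have hsum_q : ∑ i ∈ I, ‖a i‖ ^ q = 1 := by
          have hterm : ∀ i ∈ I, ‖a i‖ ^ q = ‖s i‖ ^ p / S := by
            intro i _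
            by_cases h : s i = 0
            · rw [hw i]
              simp only [h, if_true, norm_zero]
              rw [Real.zero_rpow hqp.ne_zero, Real.zero_rpow hp0.ne', zero_div]
            · have hpos : (0 : ℝ) < ‖s i‖ := norm_pos_iff.mpr h
              rw [hw i]
              simp only [h, if_false]
              rw [Real.div_rpow (Real.rpow_nonneg (norm_nonneg _) _) hD.le,
                ← Real.rpow_mul (norm_nonneg _), hDdef, ← Real.rpow_mul hS.le,
                hpq.sub_one_mul_conj, div_mul_eq_mul_div, hpq.sub_one_mul_conj,
                div_self hp0.ne', Real.rpow_one]
          rw [Finset.sum_congr rfl hterm, ← Finset.sum_div, ← hSdef, div_self hS.ne']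
        have hh := Real.inner_le_Lp_mul_Lq_of_nonneg (s := I)
          (f := fun i => ‖a i‖) (g := fun i => ‖t i‖) hqp
          (fun i _ => norm_nonneg _) (fun i _ => norm_nonneg _)
        rw [hsum_q, Real.one_rpow, one_mul] at hh
        exact hh
    have h2 : ‖∑ i ∈ I, a i * t i‖ ≤ ∑ i ∈ I, ‖a i‖ * ‖t i‖ := by
      refine le_trans (norm_sum_le _ _) ?_
      exact Finset.sum_le_sum fun i _ => le_of_eq (norm_mul _ _)
    calc ‖∑ i ∈ I, a i * t i‖ ^ p ≤ ((∑ i ∈ I, ‖t i‖ ^ p) ^ (1 / p)) ^ p :=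
          Real.rpow_le_rpow (norm_nonneg _) (le_trans h2 key) hp0.le
      _ = ∑ i ∈ I, ‖t i‖ ^ p := by
          rw [← Real.rpow_mul hR0, one_div, inv_mul_cancel₀ hp0.ne', Real.rpow_one]

end AuxLemmas

/-- For a bounded operator `u : E → F` between Banach spaces and
`1 ≤ p < ∞`, the following are equivalent: (i) `‖u(x_j)‖ → 0` for every mid `p`-summable
`(x_j)` in `E`; (ii) `(u(x_j))_j` is unconditionally `p`-summable for every mid
`p`-summable `(x_j)` in `E`. -/
theorem stmt_13 {𝕜 : Type*} [RCLike 𝕜] {E : Type*} [NormedAddCommGroup E] [NormedSpace 𝕜 E]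
    [CompleteSpace E] {F : Type*} [NormedAddCommGroup F] [NormedSpace 𝕜 F] [CompleteSpace F]
    {p : ℝ} (hp : 1 ≤ p) (u : E →L[𝕜] F) :
    (∀ x : ℕ → E, midLpNorm 𝕜 p x < ⊤ → Tendsto (fun j => ‖u (x j)‖) atTop (𝓝 0)) ↔
    (∀ x : ℕ → E, midLpNorm 𝕜 p x < ⊤ → UncondLpSummable 𝕜 p fun j => u (x j)) := by
  have hp0 : (0 : ℝ) < p := lt_of_lt_of_le one_pos hp
  constructor
  · intro h x hx
    constructor
    · intro φ
      exact summable_of_mid hp0 hx (φ.comp u)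
    · have hanti : Antitone (fun n : ℕ => weakLpNorm 𝕜 p fun j => u (x (n + j))) := by
        intro n m hnm
        simp only
        rw [weakLpNorm]
        apply iSup₂_le
        intro φ hφ
        have hle : (∑' j, (‖φ (u (x (m + j)))‖₊ : ℝ≥0∞) ^ p)
            ≤ ∑' j, (‖φ (u (x (n + j)))‖₊ : ℝ≥0∞) ^ p :=
          tail_mono (fun j => (‖φ (u (x j))‖₊ : ℝ≥0∞) ^ p) hnm
        calc (∑' j, (‖φ (u (x (m + j)))‖₊ : ℝ≥0∞) ^ p) ^ (1 / p)
            ≤ (∑' j, (‖φ (u (x (n + j)))‖₊ : ℝ≥0∞) ^ p) ^ (1 / p) :=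
              ENNReal.rpow_le_rpow hle (one_div_nonneg.mpr hp0.le)
          _ ≤ weakLpNorm 𝕜 p fun j => u (x (n + j)) := by
              rw [weakLpNorm]; exact le_iSup₂_of_le φ hφ le_rfl
      have hconv := tendsto_atTop_iInf hanti
      suffices hinf : (⨅ n, weakLpNorm 𝕜 p fun j => u (x (n + j))) = 0 by
        rwa [hinf] at hconv
      by_contra hne
      set ε : ℝ≥0∞ := min (⨅ n, weakLpNorm 𝕜 p fun j => u (x (n + j))) 1 with hεdef
      have hε0 : 0 < ε := lt_min (pos_iff_ne_zero.mpr hne) one_pos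
      have hε1 : ε ≤ 1 := min_le_right _ _
      have hεtop : ε ≠ ⊤ := (lt_of_le_of_lt hε1 ENNReal.one_lt_top).ne
      have hεle : ∀ n, ε ≤ weakLpNorm 𝕜 p fun j => u (x (n + j)) :=
        fun n => le_trans (min_le_left _ _) (iInf_le _ n)
      set γ : ℝ≥0∞ := (ε / 2) ^ p with hγdef
      have hγ0 : 0 < γ := by
        apply ENNReal.rpow_pos (ENNReal.half_pos hε0.ne')
        exact (lt_of_le_of_lt (le_trans ENNReal.half_le_self hε1) ENNReal.one_lt_top).ne
      have hγtop : γ ≠ ⊤ :=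
        (lt_of_le_of_lt (ENNReal.rpow_le_one (le_trans ENNReal.half_le_self hε1) hp0.le)
          ENNReal.one_lt_top).ne
      set δ : ℝ≥0∞ := γ / 2 with hδdef
      have hδ0 : 0 < δ := ENNReal.half_pos hγ0.ne'
      have hδtop : δ ≠ ⊤ := by
        rw [hδdef]
        exact (lt_of_le_of_lt ENNReal.half_le_self (lt_top_iff_ne_top.mpr hγtop)).ne
      have step : ∀ n : ℕ, ∃ q : ℕ × (F →L[𝕜] 𝕜), n < q.1 ∧ ‖q.2‖ ≤ 1 ∧
          δ ≤ ∑ j ∈ Finset.Ico n q.1, (‖q.2 (u (x j))‖₊ : ℝ≥0∞) ^ p := by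
        intro n
        have h1 : ε / 2 < ⨆ φ ∈ {φ : F →L[𝕜] 𝕜 | ‖φ‖ ≤ 1},
            (∑' j, (‖φ (u (x (n + j)))‖₊ : ℝ≥0∞) ^ p) ^ (1 / p) :=
          lt_of_lt_of_le (ENNReal.half_lt_self hε0.ne' hεtop) (hεle n)
        rw [lt_iSup_iff] at h1
        obtain ⟨φ, h1⟩ := h1
        rw [lt_iSup_iff] at h1
        obtain ⟨hφ, h1⟩ := h1
        have h2 : γ ≤ ∑' j, (‖φ (u (x (n + j)))‖₊ : ℝ≥0∞) ^ p := by
          calc γ = (ε / 2) ^ p := hγdef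
            _ ≤ ((∑' j, (‖φ (u (x (n + j)))‖₊ : ℝ≥0∞) ^ p) ^ (1 / p)) ^ p :=
              ENNReal.rpow_le_rpow h1.le hp0.le
            _ = ∑' j, (‖φ (u (x (n + j)))‖₊ : ℝ≥0∞) ^ p := by
              rw [← ENNReal.rpow_mul, one_div, inv_mul_cancel₀ hp0.ne', ENNReal.rpow_one]
        have hfin : (∑' j, (‖φ (u (x j))‖₊ : ℝ≥0∞) ^ p) ≠ ⊤ :=
          tsum_rpow_lt_top hp0 hx (φ.comp u)
        have htd := ENNReal.tendsto_sum_nat_add (fun j => (‖φ (u (x j))‖₊ : ℝ≥0∞) ^ p) hfin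
        have hev : ∀ᶠ i in atTop, (∑' k, (‖φ (u (x (k + i)))‖₊ : ℝ≥0∞) ^ p) < δ :=
          htd.eventually (gt_mem_nhds hδ0)
        obtain ⟨m, hm, hmn⟩ := (hev.and (eventually_gt_atTop n)).exists
        refine ⟨(m, φ), hmn, hφ, ?_⟩
        have hm' : (∑' j, (‖φ (u (x (m + j)))‖₊ : ℝ≥0∞) ^ p) < δ := by
          have heq : (∑' j, (‖φ (u (x (m + j)))‖₊ : ℝ≥0∞) ^ p)
              = ∑' k, (‖φ (u (x (k + m)))‖₊ : ℝ≥0∞) ^ p :=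
            tsum_congr fun j => by rw [add_comm]
          rw [heq]
          exact hm
        rw [tail_split (fun j => (‖φ (u (x j))‖₊ : ℝ≥0∞) ^ p) hmn.le] at h2
        have h3 : γ ≤ (∑ j ∈ Finset.Ico n m, (‖φ (u (x j))‖₊ : ℝ≥0∞) ^ p) + δ :=
          le_trans h2 (add_le_add le_rfl hm'.le)
        have h4 := tsub_le_iff_right.mpr h3
        rw [hδdef] at h4 ⊢
        rwa [ENNReal.sub_half hγtop] at h4
      choose g hg1 hg2 hg3 using step
      set N : ℕ → ℕ := fun k => Nat.rec 0 (fun _ n => (g n).1) k with hN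
      have hNlt : ∀ k, N k < N (k + 1) := fun k => hg1 (N k)
      have hNmono : Monotone N := (strictMono_nat_of_lt_succ hNlt).monotone
      set Φ : ℕ → F →L[𝕜] 𝕜 := fun k => (g (N k)).2 with hΦdef
      have hΦ1 : ∀ k, ‖Φ k‖ ≤ 1 := fun k => hg2 (N k)
      have hblock : ∀ k, δ ≤ ∑ j ∈ Finset.Ico (N k) (N (k + 1)),
          (‖Φ k (u (x j))‖₊ : ℝ≥0∞) ^ p := fun k => hg3 (N k)
      set S : ℕ → ℝ := fun k => ∑ j ∈ Finset.Ico (N k) (N (k + 1)), ‖Φ k (u (x j))‖ ^ p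
        with hSdef
      set δ' : ℝ := δ.toReal with hδ'def
      have hδ'0 : 0 < δ' := ENNReal.toReal_pos hδ0.ne' hδtop
      have hSk : ∀ k, δ' ≤ S k := by
        intro k
        have h1 := hblock k
        rw [finsum_ofReal hp0] at h1
        have h2 := (ENNReal.toReal_le_toReal hδtop ENNReal.ofReal_ne_top).mpr h1
        rwa [ENNReal.toReal_ofReal
          (Finset.sum_nonneg fun j _ => Real.rpow_nonneg (norm_nonneg _) _)] at h2
      have hSkpos : ∀ k, 0 < S k := fun k => lt_of_lt_of_le hδ'0 (hSk k)
      have hgad := fun k => holder_gadget hp (Finset.Ico (N k) (N (k + 1)))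
        (fun j => Φ k (u (x j))) (hSkpos k)
      choose A hA1 hA2 using hgad
      set z : ℕ → E := fun k => ∑ j ∈ Finset.Ico (N k) (N (k + 1)), A k j • x j with hz
      have happly : ∀ (w : E →L[𝕜] 𝕜) k,
          w (z k) = ∑ j ∈ Finset.Ico (N k) (N (k + 1)), A k j * w (x j) := by
        intro w k
        rw [hz]
        simp only
        rw [map_sum]
        exact Finset.sum_congr rfl fun j _ => by rw [map_smul, smul_eq_mul]
      have hzlow : ∀ k, δ' ^ (1 / p) ≤ ‖u (z k)‖ := by
        intro k
        have h1 : Φ k (u (z k)) = ((S k ^ (1 / p) : ℝ) : 𝕜) := by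
          have h2 := happly ((Φ k).comp u) k
          simp only [ContinuousLinearMap.comp_apply] at h2
          exact h2.trans (hA1 k)
        calc δ' ^ (1 / p) ≤ S k ^ (1 / p) :=
              Real.rpow_le_rpow hδ'0.le (hSk k) (one_div_nonneg.mpr hp0.le)
          _ = ‖Φ k (u (z k))‖ := by
              rw [h1, RCLike.norm_ofReal,
                abs_of_nonneg (Real.rpow_nonneg (le_of_lt (hSkpos k)) _)]
          _ ≤ ‖u (z k)‖ := by
              refine le_trans ((Φ k).le_opNorm _) ?_
              calc ‖Φ k‖ * ‖u (z k)‖ ≤ 1 * ‖u (z k)‖ :=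
                    mul_le_mul_of_nonneg_right (hΦ1 k) (norm_nonneg _)
                _ = ‖u (z k)‖ := one_mul _
      have hcollapse : ∀ (f : ℕ → ℝ≥0∞) (K : ℕ),
          ∑ k ∈ Finset.range K, ∑ j ∈ Finset.Ico (N k) (N (k + 1)), f j
            = ∑ j ∈ Finset.Ico (N 0) (N K), f j := by
        intro f K
        induction K with
        | zero => simp
        | succ K ih =>
          rw [Finset.sum_range_succ, ih,
            Finset.sum_Ico_consecutive _ (hNmono (Nat.zero_le K)) (hNlt K).le]
      have hzmid : midLpNorm 𝕜 p z < ⊤ := by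
        refine lt_of_le_of_lt ?_ hx
        rw [midLpNorm]
        apply iSup₂_le
        intro ψ hψ
        have hinner : ∀ (n k : ℕ), (‖ψ n (z k)‖₊ : ℝ≥0∞) ^ p
            ≤ ∑ j ∈ Finset.Ico (N k) (N (k + 1)), (‖ψ n (x j)‖₊ : ℝ≥0∞) ^ p := by
          intro n k
          rw [coe_nnnorm_rpow hp0, finsum_ofReal hp0]
          apply ENNReal.ofReal_le_ofReal
          have h5 := hA2 k (fun j => ψ n (x j))
          rwa [← happly (ψ n) k] at h5
        have hmain : (∑' n, ∑' k, (‖ψ n (z k)‖₊ : ℝ≥0∞) ^ p)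
            ≤ ∑' n, ∑' j, (‖ψ n (x j)‖₊ : ℝ≥0∞) ^ p := by
          apply ENNReal.tsum_le_tsum
          intro n
          apply ENNReal.tsum_le_of_sum_range_le
          intro K
          calc ∑ k ∈ Finset.range K, (‖ψ n (z k)‖₊ : ℝ≥0∞) ^ p
              ≤ ∑ k ∈ Finset.range K, ∑ j ∈ Finset.Ico (N k) (N (k + 1)),
                  (‖ψ n (x j)‖₊ : ℝ≥0∞) ^ p :=
                Finset.sum_le_sum fun k _ => hinner n k
            _ = ∑ j ∈ Finset.Ico (N 0) (N K), (‖ψ n (x j)‖₊ : ℝ≥0∞) ^ p :=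
                hcollapse _ K
            _ ≤ ∑' j, (‖ψ n (x j)‖₊ : ℝ≥0∞) ^ p := ENNReal.sum_le_tsum _
        calc (∑' n, ∑' k, (‖ψ n (z k)‖₊ : ℝ≥0∞) ^ p) ^ (1 / p)
            ≤ (∑' n, ∑' j, (‖ψ n (x j)‖₊ : ℝ≥0∞) ^ p) ^ (1 / p) :=
              ENNReal.rpow_le_rpow hmain (one_div_nonneg.mpr hp0.le)
          _ ≤ midLpNorm 𝕜 p x := by rw [midLpNorm]; exact le_iSup₂_of_le ψ hψ le_rfl
      have hzero := h z hzmid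
      have hev := hzero.eventually (gt_mem_nhds (Real.rpow_pos_of_pos hδ'0 (1 / p)))
      obtain ⟨k, hk⟩ := hev.exists
      exact absurd (hzlow k) (not_le.mpr hk)
  · intro h x hx
    obtain ⟨-, htail⟩ := h x hx
    have hle : ∀ n : ℕ, (‖u (x n)‖₊ : ℝ≥0∞) ≤ weakLpNorm 𝕜 p fun j => u (x (n + j)) := by
      intro n
      rcases eq_or_ne (u (x n)) 0 with h0 | h0
      · simp [h0]
      · obtain ⟨g, hg1, hg2⟩ := exists_dual_vector 𝕜 (u (x n)) (norm_ne_zero_iff.mpr h0)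
        rw [weakLpNorm]
        refine le_trans ?_ (le_iSup₂_of_le g (le_of_eq hg1) le_rfl)
        have hkey : ‖g (u (x (n + 0)))‖₊ = ‖u (x n)‖₊ := by
          rw [Nat.add_zero, hg2]
          ext
          simp [RCLike.norm_ofReal, abs_of_nonneg (norm_nonneg _)]
        have h1 : (‖u (x n)‖₊ : ℝ≥0∞) = (((‖g (u (x (n + 0)))‖₊ : ℝ≥0∞)) ^ p) ^ (1 / p) := by
          rw [hkey, ← ENNReal.rpow_mul, mul_one_div, div_self hp0.ne', ENNReal.rpow_one]
        rw [h1]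
        apply ENNReal.rpow_le_rpow _ (one_div_nonneg.mpr hp0.le)
        exact ENNReal.le_tsum 0
    have h' : Tendsto (fun n => (‖u (x n)‖₊ : ℝ≥0∞)) atTop (𝓝 0) :=
      tendsto_of_tendsto_of_tendsto_of_le_of_le tendsto_const_nhds htail
        (fun n => bot_le) hle
    have h2 := (ENNReal.tendsto_toReal (a := 0) (by simp)).comp h'
    simpa [Function.comp_def] using h2
end
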